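/- Let Q̃ be the quiver obtained from Q by adding a new vertex ∞ and n_i arrows from i to ∞ for each i ∈ I, with dimension vector d̃ = d + 1·∞ and slope function μ(e) = −e_∞ / (∑_{i∈I} e_i + e_∞) on nonzero dimension vectors ≤ d̃. Then a representation X of Q̃ of dimension vector d̃, viewed as a pair (M, f : M → V), is semistable (μ(Y) ≤ μ(X) for all nonzero proper subrepresentations Y) if and only if it is stable (strict inequality) if and only if no nonzero subrepresentation U of M is contained in Ker f. -/

import Mathlib

/-- for the extended quiver `Q̃` (new vertex `∞`, `n_i` arrows `i → ∞`),
a representation `X` of dimension vector `d̃ = d + ∞`, viewed as a pair `(M, f : M → V)`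
with `V_i = k^{n_i}`, is semistable for the slope `μ(e) = −e_∞/(∑_i e_i + e_∞)`
iff it is stable iff no nonzero subrepresentation `U` of `M` is contained in `Ker f`.
A subrepresentation of `X` is a pair `(U, W)` of a graded subspace `U` of `M` closed
under the arrow maps and a subspace `W ⊆ k` such that all coordinates of `f` map `U`
into `W` (these coordinates are the maps along the added arrows `i → ∞`). -/
theorem stmt_3 {k : Type*} [Field k] {I : Type*} [Fintype I]
    (arr : I → I → Type) (ρ : I → ℕ) (hρ : ∀ i j, arr i j → ρ i < ρ j)
    (M : I → Type*) [∀ i, AddCommGroup (M i)] [∀ i, Module k (M i)]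
    [∀ i, FiniteDimensional k (M i)]
    (Mmap : ∀ i j, arr i j → (M i →ₗ[k] M j))
    (n : I → ℕ) (f : ∀ i, M i →ₗ[k] (Fin (n i) → k)) :
    -- semistable ↔ stable
    ((∀ (U : ∀ i, Submodule k (M i)) (W : Submodule k k),
        (∀ i j (a : arr i j), (U i).map (Mmap i j a) ≤ U j) →
        (∀ i, ∀ x ∈ U i, ∀ l : Fin (n i), f i x l ∈ W) →
        ¬ ((∀ i, U i = ⊥) ∧ W = ⊥) → ¬ ((∀ i, U i = ⊤) ∧ W = ⊤) →
        -(Module.finrank k W : ℚ) /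
            ((∑ i, (Module.finrank k (U i) : ℚ)) + (Module.finrank k W : ℚ))
          ≤ -1 / ((∑ i, (Module.finrank k (M i) : ℚ)) + 1)) ↔
      (∀ (U : ∀ i, Submodule k (M i)) (W : Submodule k k),
        (∀ i j (a : arr i j), (U i).map (Mmap i j a) ≤ U j) →
        (∀ i, ∀ x ∈ U i, ∀ l : Fin (n i), f i x l ∈ W) →
        ¬ ((∀ i, U i = ⊥) ∧ W = ⊥) → ¬ ((∀ i, U i = ⊤) ∧ W = ⊤) →
        -(Module.finrank k W : ℚ) /
            ((∑ i, (Module.finrank k (U i) : ℚ)) + (Module.finrank k W : ℚ))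
          < -1 / ((∑ i, (Module.finrank k (M i) : ℚ)) + 1))) ∧
    -- stable ↔ no nonzero subrepresentation of M contained in Ker f
    ((∀ (U : ∀ i, Submodule k (M i)) (W : Submodule k k),
        (∀ i j (a : arr i j), (U i).map (Mmap i j a) ≤ U j) →
        (∀ i, ∀ x ∈ U i, ∀ l : Fin (n i), f i x l ∈ W) →
        ¬ ((∀ i, U i = ⊥) ∧ W = ⊥) → ¬ ((∀ i, U i = ⊤) ∧ W = ⊤) →
        -(Module.finrank k W : ℚ) /
            ((∑ i, (Module.finrank k (U i) : ℚ)) + (Module.finrank k W : ℚ))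
          < -1 / ((∑ i, (Module.finrank k (M i) : ℚ)) + 1)) ↔
      (∀ U : ∀ i, Submodule k (M i),
        (∀ i j (a : arr i j), (U i).map (Mmap i j a) ≤ U j) →
        (∀ i, U i ≤ LinearMap.ker (f i)) →
        ∀ i, U i = ⊥)) := by
  classical
  have hNpos : (0:ℚ) < (∑ i, (Module.finrank k (M i) : ℚ)) + 1 := by
    have : (0:ℚ) ≤ ∑ i, (Module.finrank k (M i) : ℚ) :=
      Finset.sum_nonneg fun i _ => by positivity
    linarith
  have hRneg : -1 / ((∑ i, (Module.finrank k (M i) : ℚ)) + 1) < 0 :=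
    div_neg_of_neg_of_pos (by norm_num) hNpos
  have hbt : (⊥ : Submodule k k) ≠ ⊤ := by
    intro h
    have h1 : (1:k) ∈ (⊥ : Submodule k k) := h ▸ Submodule.mem_top
    rw [Submodule.mem_bot] at h1
    exact one_ne_zero h1
  -- semistable → "no nonzero U ⊆ ker f"
  have key1 : (∀ (U : ∀ i, Submodule k (M i)) (W : Submodule k k),
        (∀ i j (a : arr i j), (U i).map (Mmap i j a) ≤ U j) →
        (∀ i, ∀ x ∈ U i, ∀ l : Fin (n i), f i x l ∈ W) →
        ¬ ((∀ i, U i = ⊥) ∧ W = ⊥) → ¬ ((∀ i, U i = ⊤) ∧ W = ⊤) →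
        -(Module.finrank k W : ℚ) /
            ((∑ i, (Module.finrank k (U i) : ℚ)) + (Module.finrank k W : ℚ))
          ≤ -1 / ((∑ i, (Module.finrank k (M i) : ℚ)) + 1)) →
      (∀ U : ∀ i, Submodule k (M i),
        (∀ i j (a : arr i j), (U i).map (Mmap i j a) ≤ U j) →
        (∀ i, U i ≤ LinearMap.ker (f i)) →
        ∀ i, U i = ⊥) := by
    intro hss U hcl hker
    by_contra hbad
    push_neg at hbad
    have hmap : ∀ i, ∀ x ∈ U i, ∀ l : Fin (n i), f i x l ∈ (⊥ : Submodule k k) := by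
      intro i x hx l
      have hfx : f i x = 0 := LinearMap.mem_ker.mp (hker i hx)
      rw [hfx, Submodule.mem_bot]; rfl
    have hne : ¬ ((∀ i, U i = ⊥) ∧ (⊥ : Submodule k k) = ⊥) := fun h => by
      obtain ⟨i, hi⟩ := hbad; exact hi (h.1 i)
    have hpr : ¬ ((∀ i, U i = ⊤) ∧ (⊥ : Submodule k k) = ⊤) := fun h => hbt h.2
    have := hss U ⊥ hcl hmap hne hpr
    rw [finrank_bot] at this
    simp only [Nat.cast_zero, neg_zero, zero_div] at this
    linarith
  -- "no nonzero U ⊆ ker f" → stable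
  have key2 : (∀ U : ∀ i, Submodule k (M i),
        (∀ i j (a : arr i j), (U i).map (Mmap i j a) ≤ U j) →
        (∀ i, U i ≤ LinearMap.ker (f i)) →
        ∀ i, U i = ⊥) →
      (∀ (U : ∀ i, Submodule k (M i)) (W : Submodule k k),
        (∀ i j (a : arr i j), (U i).map (Mmap i j a) ≤ U j) →
        (∀ i, ∀ x ∈ U i, ∀ l : Fin (n i), f i x l ∈ W) →
        ¬ ((∀ i, U i = ⊥) ∧ W = ⊥) → ¬ ((∀ i, U i = ⊤) ∧ W = ⊤) →
        -(Module.finrank k W : ℚ) /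
            ((∑ i, (Module.finrank k (U i) : ℚ)) + (Module.finrank k W : ℚ))
          < -1 / ((∑ i, (Module.finrank k (M i) : ℚ)) + 1)) := by
    intro hker U W hcl hmap hne hpr
    rcases Ideal.eq_bot_or_top W with hW | hW
    · -- W = ⊥ : then U ⊆ ker f, so U = ⊥, contradicting nonzeroness
      exfalso
      apply hne
      refine ⟨hker U hcl ?_, hW⟩
      intro i x hx
      rw [LinearMap.mem_ker]
      funext l
      have := hmap i x hx l
      rw [hW, Submodule.mem_bot] at this
      exact this
    · -- W = ⊤
      have hWr : Module.finrank k W = 1 := by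
        rw [hW, finrank_top, Module.finrank_self]
      have hU : ∃ i, U i ≠ ⊤ := by
        by_contra h
        push_neg at h
        exact hpr ⟨h, hW⟩
      obtain ⟨i0, hi0⟩ := hU
      have hlt : (∑ i, Module.finrank k (U i)) < ∑ i, Module.finrank k (M i) :=
        Finset.sum_lt_sum (fun i _ => Submodule.finrank_le (U i))
          ⟨i0, Finset.mem_univ _, Submodule.finrank_lt hi0⟩
      have hltQ : (∑ i, (Module.finrank k (U i) : ℚ)) <
          ∑ i, (Module.finrank k (M i) : ℚ) := by exact_mod_cast hlt
      have hUnn : (0:ℚ) ≤ ∑ i, (Module.finrank k (U i) : ℚ) :=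
        Finset.sum_nonneg fun i _ => by positivity
      rw [hWr]
      push_cast
      rw [div_lt_div_iff₀ (by linarith) (by linarith)]
      nlinarith
  exact ⟨⟨fun h => key2 (key1 h),
          fun h U W a b c d => (h U W a b c d).le⟩,
        ⟨fun h => key1 (fun U W a b c d => (h U W a b c d).le), key2⟩⟩
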